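/- For every infinite cardinal κ, the ordinal τ_κ = sup{τ_G + 1 : G a centerless group of cardinality ≤ κ} satisfies τ_κ < (2^κ)⁺; that is, there is an ordinal below (2^κ)⁺ strictly bounding the stabilization ordinals of the automorphism towers of all centerless groups of cardinality at most κ. -/

import Mathlib

universe u

/-- The automorphism tower of a centerless group `G`: an ordinal-indexed increasing
continuous chain of groups, starting at `G`, where each successor stage is (identified
with) the automorphism group of the previous stage via the conjugation embedding. -/
structure AutTower (G : Type u) [Group G] where
  /-- the `o`-th stage `G^o` of the tower -/
  Stage : Ordinal.{u} → GrpCat.{u}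
  /-- the inclusion maps of the tower -/
  map : ∀ ⦃o₁ o₂ : Ordinal.{u}⦄, o₁ ≤ o₂ → (↥(Stage o₁) →* ↥(Stage o₂))
  map_id : ∀ (o : Ordinal.{u}) (x : ↥(Stage o)), map le_rfl x = x
  map_comp : ∀ ⦃o₁ o₂ o₃ : Ordinal.{u}⦄ (h₁ : o₁ ≤ o₂) (h₂ : o₂ ≤ o₃) (x : ↥(Stage o₁)),
      map h₂ (map h₁ x) = map (h₁.trans h₂) x
  map_injective : ∀ ⦃o₁ o₂ : Ordinal.{u}⦄ (h : o₁ ≤ o₂), Function.Injective (map h)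
  /-- the identification of `G` with the `0`-th stage -/
  emb0 : G ≃* ↥(Stage 0)
  /-- the identification of the `(o+1)`-st stage with `Aut(G^o)` -/
  succIso : ∀ o : Ordinal.{u}, ↥(Stage (o + 1)) ≃* MulAut ↥(Stage o)
  /-- under the above identification, the inclusion `G^o ≤ G^{o+1}` is `g ↦` conjugation by `g` -/
  succIso_map : ∀ (o : Ordinal.{u}) (x : ↥(Stage o)),
      succIso o (map (le_self_add : o ≤ o + 1) x) = MulAut.conj x
  /-- at limit stages the tower is continuous: `G^δ = ⋃_{α<δ} G^α` -/
  limit_covers : ∀ (o : Ordinal.{u}), Order.IsSuccLimit o → ∀ x : ↥(Stage o),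
      ∃ (o' : Ordinal.{u}) (h : o' < o), x ∈ Set.range (map h.le)

namespace AutTower

variable {G : Type u} [Group G]

/-- the embedding of `G` into the `o`-th stage of its automorphism tower -/
def embed (T : AutTower G) (o : Ordinal.{u}) : G →* ↥(T.Stage o) :=
  (T.map (zero_le : 0 ≤ o)).comp T.emb0.toMonoidHom

/-- `G^{o+1} = G^o`, i.e. the inclusion of stage `o` into stage `o+1` is onto -/
def StabilizesAt (T : AutTower G) (o : Ordinal.{u}) : Prop :=
  Function.Surjective (T.map (le_self_add : o ≤ o + 1))

end AutTower
set_option linter.dupNamespace false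


noncomputable def cseq (F : Ordinal.{u} → Ordinal.{u}) : Ordinal.{u} → Ordinal.{u}
  | i => F (Ordinal.blsub i fun j _ => cseq F j)
termination_by i => i
decreasing_by exact ‹_›

theorem cseq_eq (F : Ordinal.{u} → Ordinal.{u}) (i : Ordinal.{u}) :
    cseq F i = F (Ordinal.blsub i fun j _ => cseq F j) := by rw [cseq]

theorem cseq_strict {F : Ordinal.{u} → Ordinal.{u}} (hF : ∀ γ, γ < F γ)
    {j i : Ordinal.{u}} (h : j < i) : cseq F j < cseq F i := by
  rw [cseq_eq F i]
  exact lt_trans (Ordinal.lt_blsub (fun j _ => cseq F j) j h) (hF _)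

theorem cseq_mono {F : Ordinal.{u} → Ordinal.{u}} (hF : ∀ γ, γ < F γ)
    {j i : Ordinal.{u}} (h : j ≤ i) : cseq F j ≤ cseq F i := by
  rcases lt_or_eq_of_le h with h' | rfl
  · exact (cseq_strict hF h').le
  · exact le_rfl

theorem exists_closure_point (κ : Cardinal.{u}) (hκ : Cardinal.aleph0 ≤ κ)
    {c : Cardinal.{u}} (hreg : c.IsRegular) (hsκc : Order.succ κ < c)
    (g : Ordinal.{u} → Ordinal.{u}) (hg : ∀ β, g β < c.ord)
    (Gty : Type u) (hG : Cardinal.mk Gty ≤ κ) :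
    ∃ δ : Ordinal.{u}, δ < c.ord ∧ Order.IsSuccLimit δ ∧ (∀ β, β < δ → g β < δ) ∧
      (∀ f : Gty → Ordinal.{u}, (∀ x, f x < δ) → ∃ b, b < δ ∧ ∀ x, f x < b) := by
  set o : Ordinal.{u} := (Order.succ κ).ord with ho
  have hsreg : (Order.succ κ).IsRegular := Cardinal.isRegular_succ hκ
  have hcofo : o.cof = Order.succ κ := hsreg.cof_eq
  have hκs : Cardinal.aleph0 ≤ Order.succ κ := hκ.trans (Order.le_succ κ)
  have holim : Order.IsSuccLimit o := Cardinal.isSuccLimit_ord hκs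
  have hclim : Order.IsSuccLimit c.ord := Cardinal.isSuccLimit_ord hreg.aleph0_le
  have hcofc : c.ord.cof = c := hreg.cof_eq
  set F : Ordinal.{u} → Ordinal.{u} :=
    fun γ => max (γ + 1) (Ordinal.blsub (γ+1) (fun β _ => g β)) with hFdef
  have hF : ∀ γ, γ < F γ := fun γ =>
    lt_of_lt_of_le (by rw [Ordinal.add_one_eq_succ]; exact Order.lt_succ γ) (le_max_left _ _)
  set d := cseq F with hd
  have hdlt : ∀ i, i < o → d i < c.ord := by
    intro i
    induction i using Ordinal.induction with
    | _ i IH =>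
    intro hio
    have hcardi : i.card < c.ord.cof := by
      rw [hcofc]
      refine lt_of_le_of_lt ?_ hsκc
      rw [← Cardinal.card_ord (Order.succ κ)]
      exact Ordinal.card_le_card hio.le
    have hB : Ordinal.blsub i (fun j _ => d j) < c.ord :=
      Ordinal.blsub_lt_ord hcardi (fun j hj => IH j hj (hj.trans hio))
    rw [hd, cseq_eq]
    apply max_lt
    · rw [Ordinal.add_one_eq_succ]
      exact hclim.succ_lt hB
    · apply Ordinal.blsub_lt_ord _ (fun β _ => hg β)
      rw [hcofc]
      apply Cardinal.lt_ord.mp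
      rw [Ordinal.add_one_eq_succ]
      exact hclim.succ_lt hB
  set δ := Ordinal.bsup o (fun i _ => d i) with hδ
  have hδc : δ < c.ord := by
    apply Ordinal.bsup_lt_ord _ hdlt
    rw [hcofc, ho, Cardinal.card_ord]
    exact hsκc
  have hlt : ∀ i, i < o → d i < δ := by
    intro i hi
    have h1 : i < i + 1 := by rw [Ordinal.add_one_eq_succ]; exact Order.lt_succ i
    have h2 : i + 1 < o := by rw [Ordinal.add_one_eq_succ]; exact holim.succ_lt hi
    exact lt_of_lt_of_le (cseq_strict hF h1) (Ordinal.le_bsup _ (i+1) h2)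
  have hBelow : ∀ β, β < δ → ∃ i, ∃ _ : i < o, β < d i := by
    intro β hβ
    exact (Ordinal.lt_bsup _).mp hβ
  have hδlim : Order.IsSuccLimit δ := by
    refine Ordinal.isSuccLimit_iff.mpr ⟨?_, Order.isSuccPrelimit_of_succ_lt ?_⟩
    · intro h0
      have := lt_of_le_of_lt (zero_le : 0 ≤ d 0) (hlt 0 holim.pos)
      rw [h0] at this
      exact absurd this (not_lt.mpr zero_le)
    · intro a ha
      obtain ⟨i, hi, hai⟩ := hBelow a ha
      exact lt_of_le_of_lt (Order.succ_le_of_lt hai) (hlt i hi)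
  refine ⟨δ, hδc, hδlim, ?_, ?_⟩
  · intro β hβ
    obtain ⟨i, hi, hβi⟩ := hBelow β hβ
    have hi1 : i + 1 < o := by rw [Ordinal.add_one_eq_succ]; exact holim.succ_lt hi
    have hgd : g β < d (i + 1) := by
      rw [hd, cseq_eq]
      have hβB : β < Ordinal.blsub (i+1) (fun j _ => cseq F j) := by
        refine lt_trans hβi ?_
        have := Ordinal.lt_blsub (fun j (_ : j < i + 1) => cseq F j) i
          (by rw [Ordinal.add_one_eq_succ]; exact Order.lt_succ i)
        exact this
      refine lt_of_lt_of_le ?_ (le_max_right _ _)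
      exact Ordinal.lt_blsub (fun β _ => g β) β
        (lt_trans hβB (by rw [Ordinal.add_one_eq_succ]; exact Order.lt_succ _))
    exact lt_trans hgd (hlt _ hi1)
  · intro f hf
    have hex : ∀ x, ∃ i, i < o ∧ f x < d i := by
      intro x
      obtain ⟨i, hi, h⟩ := hBelow (f x) (hf x)
      exact ⟨i, hi, h⟩
    choose i hio hfd using hex
    have hsup : iSup i < o := by
      rw [ho]
      apply Ordinal.iSup_lt_of_lt_cof _ (fun x => by rw [← ho]; exact hio x)
      rw [← ho, hcofo]
      exact lt_of_le_of_lt hG (Order.lt_succ κ)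
    exact ⟨d (iSup i), hlt _ hsup,
      fun x => lt_of_lt_of_le (hfd x) (cseq_mono hF (Ordinal.le_iSup i x))⟩

/-- enumeration of ordinals below `o` by `o.ToType`, with instance made explicit -/
noncomputable def tyin (o : Ordinal.{u}) (i : o.ToType) : Ordinal.{u} :=
  @Ordinal.typein o.ToType (· < ·) isWellOrder_lt i

theorem tyin_lt (o : Ordinal.{u}) (i : o.ToType) : tyin o i < o := Ordinal.typein_lt_self i

theorem tyin_surj (o : Ordinal.{u}) {a : Ordinal.{u}} (h : a < o) : ∃ i, tyin o i = a :=
  @Ordinal.typein_surj o.ToType (· < ·) isWellOrder_lt a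
    (by rw [Ordinal.type_toType]; exact h)

namespace AutTower
variable {G : Type u} [Group G] (T : AutTower G)

theorem map_embed {o₁ o₂ : Ordinal.{u}} (h : o₁ ≤ o₂) (g : G) :
    T.map h (T.embed o₁ g) = T.embed o₂ g := by
  simp [embed, map_comp]

theorem conj_map (o : Ordinal.{u}) (y : ↥(T.Stage (o+1))) (z : ↥(T.Stage o)) :
    y * T.map ((le_self_add : o ≤ o + 1)) z * y⁻¹
      = T.map ((le_self_add : o ≤ o + 1)) (T.succIso o y z) := by
  apply (T.succIso o).injective
  rw [map_mul, map_mul, map_inv, T.succIso_map, T.succIso_map]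
  ext w
  simp [MulAut.conj_apply, mul_assoc]

theorem cent_and_rigid (hZ : Subgroup.center G = ⊥) : ∀ o : Ordinal.{u},
    (∀ x : ↥(T.Stage o), (∀ g : G, x * T.embed o g = T.embed o g * x) → x = 1) ∧
    (∀ ψ : MulAut ↥(T.Stage o), (∀ g : G, ψ (T.embed o g) = T.embed o g) → ψ = 1) := by
  intro o
  induction o using Ordinal.induction with
  | _ o IH =>
  have hC : ∀ x : ↥(T.Stage o), (∀ g : G, x * T.embed o g = T.embed o g * x) → x = 1 := by
    rcases Ordinal.zero_or_succ_or_isSuccLimit o with h0 | ⟨β, hβ⟩ | hlim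
    · subst h0
      intro x hx
      have he : ∀ g : G, T.embed 0 g = T.emb0 g := fun g => T.map_id 0 (T.emb0 g)
      have hx0 : T.emb0.symm x ∈ Subgroup.center G := by
        rw [Subgroup.mem_center_iff]
        intro g
        apply T.emb0.injective
        have h := hx g
        rw [he] at h
        simp only [map_mul, MulEquiv.apply_symm_apply]
        exact h.symm
      rw [hZ, Subgroup.mem_bot] at hx0
      have : x = T.emb0 (T.emb0.symm x) := (T.emb0.apply_symm_apply x).symm
      rw [this, hx0, map_one]
    · rw [← Ordinal.add_one_eq_succ] at hβ
      subst hβ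
      intro x hx
      set ψ := T.succIso β x with hψ
      have hEmb : ∀ g : G, T.embed (β+1) g
          = T.map ((le_self_add : β ≤ β + 1)) (T.embed β g) := fun g => (T.map_embed _ g).symm
      have key : ∀ g : G, ψ (T.embed β g) = T.embed β g := by
        intro g
        apply T.map_injective ((le_self_add : β ≤ β + 1))
        rw [← T.conj_map, ← hEmb, hx g]
        group
      have hβlt : β < β + 1 := by
        rw [Ordinal.add_one_eq_succ]; exact Order.lt_succ β
      have hψ1 : ψ = 1 := (IH β hβlt).2 ψ key
      have : x = (T.succIso β).symm ψ := ((T.succIso β).symm_apply_apply x).symm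
      rw [this, hψ1, map_one]
    · intro x hx
      obtain ⟨β, hβ, y, hy⟩ := T.limit_covers o hlim x
      have hyc : ∀ g : G, y * T.embed β g = T.embed β g * y := by
        intro g
        apply T.map_injective hβ.le
        rw [map_mul, map_mul, T.map_embed, hy]
        exact hx g
      have : y = 1 := (IH β hβ).1 y hyc
      rw [← hy, this, map_one]
  refine ⟨hC, ?_⟩
  intro ψ hψ
  have key : ∀ o', o' ≤ o → ∀ y : ↥(T.Stage o'),
      ∀ h : o' ≤ o, ψ (T.map h y) = T.map h y := by
    intro o'
    induction o' using Ordinal.induction with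
    | _ o' IH' =>
    intro ho' y h
    rcases Ordinal.zero_or_succ_or_isSuccLimit o' with h0 | ⟨β, hβ⟩ | hlim
    · subst h0
      have hy : y = T.emb0 (T.emb0.symm y) := (T.emb0.apply_symm_apply y).symm
      rw [hy]
      exact hψ (T.emb0.symm y)
    · rw [← Ordinal.add_one_eq_succ] at hβ
      subst hβ
      have hβlt : β < β + 1 := by
        rw [Ordinal.add_one_eq_succ]; exact Order.lt_succ β
      have hβo : β ≤ o := le_trans hβlt.le h
      set x := T.map h y with hx
      have step1 : ∀ z : ↥(T.Stage β),
          x * T.map hβo z * x⁻¹ = T.map hβo (T.succIso β y z) := by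
        intro z
        have h2 : T.map hβo z = T.map h (T.map ((le_self_add : β ≤ β + 1)) z) :=
          (T.map_comp _ _ _).symm
        rw [h2, hx]
        calc T.map h y * T.map h (T.map _ z) * (T.map h y)⁻¹
            = T.map h (y * T.map ((le_self_add : β ≤ β + 1)) z * y⁻¹) := by
              rw [map_mul, map_mul, map_inv]
          _ = T.map h (T.map ((le_self_add : β ≤ β + 1)) (T.succIso β y z)) := by
              rw [T.conj_map]
          _ = T.map hβo (T.succIso β y z) := T.map_comp _ _ _
      have hz : ∀ z : ↥(T.Stage β), ψ (T.map hβo z) = T.map hβo z :=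
        fun z => IH' β hβlt hβo z hβo
      have h1 : ∀ z : ↥(T.Stage β),
          ψ x * T.map hβo z * (ψ x)⁻¹ = x * T.map hβo z * x⁻¹ := by
        intro z
        calc ψ x * T.map hβo z * (ψ x)⁻¹
            = ψ (x * T.map hβo z * x⁻¹) := by rw [map_mul, map_mul, map_inv, hz]
          _ = ψ (T.map hβo (T.succIso β y z)) := by rw [step1]
          _ = T.map hβo (T.succIso β y z) := hz _
          _ = x * T.map hβo z * x⁻¹ := (step1 z).symm
      have hcomm : ∀ g : G, (x⁻¹ * ψ x) * T.embed o g = T.embed o g * (x⁻¹ * ψ x) := by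
        intro g
        have h3 := h1 (T.embed β g)
        rw [T.map_embed] at h3
        have h4 := congrArg (fun w => x⁻¹ * w * ψ x) h3
        simpa [mul_assoc] using h4
      have h5 : x⁻¹ * ψ x = 1 := hC _ hcomm
      rw [inv_mul_eq_one] at h5
      exact h5.symm
    · obtain ⟨γ, hγ, z, hz⟩ := T.limit_covers o' hlim y
      rw [← hz, T.map_comp]
      exact IH' γ hγ (le_trans hγ.le ho') z _
  ext x
  have h0 := key o le_rfl x le_rfl
  rwa [T.map_id] at h0

theorem card_stage_le (hZ : Subgroup.center G = ⊥) (κ : Cardinal.{u}) (hκ : Cardinal.aleph0 ≤ κ)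
    (hcard : Cardinal.mk G ≤ κ) :
    ∀ o : Ordinal.{u}, o < (Order.succ ((2:Cardinal.{u}) ^ κ)).ord →
      Cardinal.mk ↥(T.Stage o) ≤ 2 ^ κ := by
  have h2κ : Cardinal.aleph0 ≤ (2:Cardinal.{u})^κ := hκ.trans (Cardinal.cantor κ).le
  intro o
  induction o using Ordinal.induction with
  | _ o IH =>
  intro ho
  rcases Ordinal.zero_or_succ_or_isSuccLimit o with h0 | ⟨β, hβ⟩ | hlim
  · subst h0
    calc Cardinal.mk ↥(T.Stage 0) = Cardinal.mk G := (Cardinal.mk_congr T.emb0.toEquiv).symm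
      _ ≤ κ := hcard
      _ ≤ 2 ^ κ := (Cardinal.cantor κ).le
  · rw [← Ordinal.add_one_eq_succ] at hβ
    subst hβ
    have hβlt : β < β + 1 := by rw [Ordinal.add_one_eq_succ]; exact Order.lt_succ β
    have hβo : β < (Order.succ ((2:Cardinal.{u}) ^ κ)).ord := hβlt.trans ho
    have inj : Function.Injective
        (fun (ψ : MulAut ↥(T.Stage β)) => (fun g : G => ψ (T.embed β g))) := by
      intro ψ₁ ψ₂ hfeq
      have h1 : ∀ g : G, (ψ₂⁻¹ * ψ₁) (T.embed β g) = T.embed β g := by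
        intro g
        have := congrFun hfeq g
        simp only at this
        show ψ₂⁻¹ (ψ₁ (T.embed β g)) = _
        rw [this]
        exact ψ₂.symm_apply_apply _
      have h2 : ψ₂⁻¹ * ψ₁ = 1 := (T.cent_and_rigid hZ β).2 _ h1
      rw [inv_mul_eq_one] at h2
      exact h2.symm
    calc Cardinal.mk ↥(T.Stage (β+1))
        = Cardinal.mk (MulAut ↥(T.Stage β)) := Cardinal.mk_congr (T.succIso β).toEquiv
      _ ≤ Cardinal.mk (G → ↥(T.Stage β)) := Cardinal.mk_le_of_injective inj
      _ = Cardinal.mk ↥(T.Stage β) ^ Cardinal.mk G := (Cardinal.power_def _ _).symm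
      _ ≤ (2 ^ κ) ^ Cardinal.mk G :=
          Cardinal.power_le_power_right (IH β hβlt hβo)
      _ ≤ (2 ^ κ) ^ κ := by
          apply Cardinal.power_le_power_left _ hcard
          exact Cardinal.power_ne_zero κ two_ne_zero
      _ = 2 ^ (κ * κ) := (Cardinal.power_mul).symm
      _ = 2 ^ κ := by rw [Cardinal.mul_eq_self hκ]
  · have hto : ∀ i : o.ToType, tyin o i < o := fun i => Ordinal.typein_lt_self i
    have hsurj : Function.Surjective
        (fun p : (Σ i : o.ToType, ↥(T.Stage (tyin o i))) =>
          (T.map (hto p.1).le p.2 : ↥(T.Stage o))) := by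
      intro x
      obtain ⟨β, hβ, y, hy⟩ := T.limit_covers o hlim x
      obtain ⟨i, hi⟩ := tyin_surj o hβ
      subst hi
      exact ⟨⟨i, y⟩, hy⟩
    calc Cardinal.mk ↥(T.Stage o)
        ≤ Cardinal.mk (Σ i : o.ToType, ↥(T.Stage (tyin o i))) :=
          Cardinal.mk_le_of_surjective hsurj
      _ = Cardinal.sum (fun i : o.ToType =>
            Cardinal.mk ↥(T.Stage (tyin o i))) :=
          Cardinal.mk_sigma _
      _ ≤ Cardinal.sum (fun _ : o.ToType => (2:Cardinal.{u}) ^ κ) :=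
          Cardinal.sum_le_sum _ _ (fun i => IH _ (hto i) ((hto i).trans ho))
      _ = Cardinal.mk o.ToType * 2 ^ κ := Cardinal.sum_const' _ _
      _ = o.card * 2 ^ κ := by rw [Cardinal.mk_toType]
      _ ≤ (2 ^ κ) * 2 ^ κ := by
          apply mul_le_mul' _ le_rfl
          exact Order.lt_succ_iff.mp (Cardinal.lt_ord.mp ho)
      _ = 2 ^ κ := Cardinal.mul_eq_self h2κ

theorem exists_stab (κ : Cardinal.{u}) (hκ : Cardinal.aleph0 ≤ κ)
    (hZ : Subgroup.center G = ⊥) (hcard : Cardinal.mk G ≤ κ) :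
    ∃ α : Ordinal.{u}, α < (Order.succ ((2:Cardinal.{u}) ^ κ)).ord ∧ T.StabilizesAt α := by
  classical
  set Λ : Ordinal.{u} := (Order.succ ((2:Cardinal.{u}) ^ κ)).ord with hΛdef
  have h2κ : Cardinal.aleph0 ≤ (2:Cardinal.{u}) ^ κ := hκ.trans (Cardinal.cantor κ).le
  have hreg : (Order.succ ((2:Cardinal.{u}) ^ κ)).IsRegular := Cardinal.isRegular_succ h2κ
  have hΛlim : Order.IsSuccLimit Λ := Cardinal.isSuccLimit_ord (h2κ.trans (Order.le_succ _))
  have hΛcof : Λ.cof = Order.succ ((2:Cardinal.{u}) ^ κ) := hreg.cof_eq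
  by_contra hcon
  push_neg at hcon
  -- hcon : ∀ α, α < Λ → ¬ T.StabilizesAt α
  have hsucclt : ∀ {α : Ordinal.{u}}, α < Λ → α + 1 < Λ := by
    intro α h
    rw [Ordinal.add_one_eq_succ]
    exact hΛlim.succ_lt h
  -- choose witnesses of non-stabilization
  have hxex : ∀ α (hα : α < Λ), ∃ x : ↥(T.Stage Λ),
      (∃ y : ↥(T.Stage (α+1)), T.map (hsucclt hα).le y = x) ∧
      ¬∃ z : ↥(T.Stage α), T.map (le_of_lt hα) z = x := by
    intro α hα
    have hns : ¬ Function.Surjective (T.map ((le_self_add : α ≤ α + 1))) := hcon α hα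
    rw [Function.Surjective] at hns
    push_neg at hns
    obtain ⟨y, hy⟩ := hns
    refine ⟨T.map (hsucclt hα).le y, ⟨y, rfl⟩, ?_⟩
    rintro ⟨z, hz⟩
    have hfac : T.map (le_of_lt hα) z
        = T.map (hsucclt hα).le (T.map ((le_self_add : α ≤ α + 1)) z) :=
      (T.map_comp _ _ _).symm
    rw [hfac] at hz
    exact hy z (T.map_injective (hsucclt hα).le hz)
  choose X hX1 hX2 using hxex
  have hCΛ := (T.cent_and_rigid hZ Λ).1
  -- distinctness of the X's
  have hXne : ∀ δ₁ δ₂ (h₁ : δ₁ < Λ) (h₂ : δ₂ < Λ), δ₁ < δ₂ → X δ₁ h₁ ≠ X δ₂ h₂ := by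
    intro δ₁ δ₂ h₁ h₂ hlt heq
    obtain ⟨y, hy⟩ := hX1 δ₁ h₁
    apply hX2 δ₂ h₂
    have h12 : δ₁ + 1 ≤ δ₂ := by
      rw [Ordinal.add_one_eq_succ]; exact Order.succ_le_of_lt hlt
    refine ⟨T.map h12 y, ?_⟩
    rw [T.map_comp, ← heq, ← hy]
  have hXinj : ∀ δ₁ δ₂ (h₁ : δ₁ < Λ) (h₂ : δ₂ < Λ),
      (∀ g : G, X δ₁ h₁ * T.embed Λ g * (X δ₁ h₁)⁻¹
        = X δ₂ h₂ * T.embed Λ g * (X δ₂ h₂)⁻¹) → δ₁ = δ₂ := by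
    intro δ₁ δ₂ h₁ h₂ hco
    have hcomm : ∀ g : G, ((X δ₂ h₂)⁻¹ * X δ₁ h₁) * T.embed Λ g
        = T.embed Λ g * ((X δ₂ h₂)⁻¹ * X δ₁ h₁) := by
      intro g
      have := congrArg (fun w => (X δ₂ h₂)⁻¹ * w * X δ₁ h₁) (hco g)
      simpa [mul_assoc] using this
    have h1 : (X δ₂ h₂)⁻¹ * X δ₁ h₁ = 1 := hCΛ _ hcomm
    rw [inv_mul_eq_one] at h1
    rcases lt_trichotomy δ₁ δ₂ with h | h | h
    · exact absurd h1.symm (hXne δ₁ δ₂ h₁ h₂ h)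
    · exact h
    · exact absurd h1 (hXne δ₂ δ₁ h₂ h₁ h)
  -- the bounding function
  have hboundex : ∀ β (hβΛ : β < Λ), ∃ b, b < Λ ∧ ∀ δ (hδ : δ < Λ), Order.IsSuccLimit δ →
      (∀ g : G, ∃ u : ↥(T.Stage β), T.map (le_of_lt hβΛ) u
        = X δ hδ * T.embed Λ g * (X δ hδ)⁻¹) → δ ≤ b := by
    intro β hβ
    set S : Set ↥(T.Stage Λ) := Set.range (T.map (le_of_lt hβ)) with hS
    set P : (G → ↥S) → Ordinal.{u} → Prop := fun φ δ =>
      ∃ h : δ < Λ, Order.IsSuccLimit δ ∧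
        ∀ g : G, (φ g : ↥(T.Stage Λ)) = X δ h * T.embed Λ g * (X δ h)⁻¹ with hPdef
    have hPuniq : ∀ φ δ₁ δ₂, P φ δ₁ → P φ δ₂ → δ₁ = δ₂ := by
      rintro φ δ₁ δ₂ ⟨hd₁, _, hv₁⟩ ⟨hd₂, _, hv₂⟩
      exact hXinj δ₁ δ₂ hd₁ hd₂ (fun g => by rw [← hv₁ g, ← hv₂ g])
    set f : (G → ↥S) → Ordinal.{u} := fun φ =>
      if h : ∃ δ, P φ δ then h.choose else 0 with hfdef
    have hflt : ∀ φ, f φ < Λ := by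
      intro φ
      simp only [hfdef]
      split
      · next h => obtain ⟨hd, _, _⟩ := h.choose_spec; exact hd
      · exact hΛlim.pos
    have hcardS : Cardinal.mk ↥S ≤ 2 ^ κ := by
      refine le_trans Cardinal.mk_range_le ?_
      exact T.card_stage_le hZ κ hκ hcard β hβ
    have hcardι : Cardinal.mk (G → ↥S) < Λ.cof := by
      rw [hΛcof]
      refine lt_of_le_of_lt ?_ (Order.lt_succ _)
      calc Cardinal.mk (G → ↥S) = Cardinal.mk ↥S ^ Cardinal.mk G := (Cardinal.power_def _ _).symm
        _ ≤ (2 ^ κ) ^ Cardinal.mk G := Cardinal.power_le_power_right hcardS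
        _ ≤ (2 ^ κ) ^ κ := Cardinal.power_le_power_left
            (Cardinal.power_ne_zero κ two_ne_zero) hcard
        _ = 2 ^ (κ * κ) := (Cardinal.power_mul).symm
        _ = 2 ^ κ := by rw [Cardinal.mul_eq_self hκ]
    have hsupflt : iSup f < Λ := Ordinal.iSup_lt_of_lt_cof hcardι hflt
    refine ⟨iSup f, hsupflt, ?_⟩
    intro δ hδ hδlim hval
    have hmem : ∀ g : G, X δ hδ * T.embed Λ g * (X δ hδ)⁻¹ ∈ S := by
      intro g
      obtain ⟨u, hu⟩ := hval g
      exact ⟨u, hu⟩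
    set φ : G → ↥S := fun g => ⟨_, hmem g⟩ with hφ
    have hPφ : P φ δ := ⟨hδ, hδlim, fun g => rfl⟩
    have hful : f φ = δ := by
      simp only [hfdef]
      split
      · next h => exact hPuniq φ _ _ h.choose_spec hPφ
      · next h => exact absurd ⟨δ, hPφ⟩ h
    rw [← hful]
    exact Ordinal.le_iSup f φ
  set gbound : Ordinal.{u} → Ordinal.{u} := fun β =>
    if h : β < Λ then (hboundex β h).choose else 0 with hgdef
  have hglt : ∀ β, gbound β < Λ := by
    intro β
    simp only [hgdef]
    split
    · next h => exact (hboundex β h).choose_spec.1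
    · exact hΛlim.pos
  have hgkey : ∀ β (hβ : β < Λ) δ (hδ : δ < Λ), Order.IsSuccLimit δ →
      (∀ g : G, ∃ u : ↥(T.Stage β), T.map (le_of_lt hβ) u
        = X δ hδ * T.embed Λ g * (X δ hδ)⁻¹) → δ ≤ gbound β := by
    intro β hβ δ hδ hδl hval
    have := (hboundex β hβ).choose_spec.2 δ hδ hδl hval
    simp only [hgdef]
    simpa [dif_pos hβ] using this
  -- a closure point
  obtain ⟨δ, hδΛ, hδlim, hgcl, hκcl⟩ := exists_closure_point κ hκ hreg
    (lt_of_le_of_lt (Order.succ_le_of_lt (Cardinal.cantor κ)) (Order.lt_succ _))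
    gbound hglt G hcard
  -- conjugation by X δ maps the generators into earlier stages
  have hval0 : ∀ g : G, ∃ β, ∃ hβδ : β < δ, ∃ u : ↥(T.Stage β),
      T.map ((le_of_lt hβδ).trans hδΛ.le) u = X δ hδΛ * T.embed Λ g * (X δ hδΛ)⁻¹ := by
    intro g
    obtain ⟨y, hy⟩ := hX1 δ hδΛ
    have hδ1 : δ + 1 ≤ Λ := (hsucclt hδΛ).le
    have hw : T.map hδΛ.le (T.succIso δ y (T.embed δ g))
        = X δ hδΛ * T.embed Λ g * (X δ hδΛ)⁻¹ := by
      have he : T.embed Λ g = T.map hδ1 (T.map ((le_self_add : δ ≤ δ + 1)) (T.embed δ g)) := by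
        rw [T.map_comp, T.map_embed]
      rw [he, ← hy, ← map_mul, ← map_inv, ← map_mul, T.conj_map, T.map_comp]
    obtain ⟨β, hβδ, w', hw'⟩ := T.limit_covers δ hδlim (T.succIso δ y (T.embed δ g))
    exact ⟨β, hβδ, w', by rw [← hw, ← hw', T.map_comp]⟩
  choose bg hbglt hbgu using hval0
  obtain ⟨b, hbδ, hble⟩ := hκcl bg hbglt
  have hbΛ : b < Λ := lt_trans hbδ hδΛ
  have hvalb : ∀ g : G, ∃ u : ↥(T.Stage b), T.map (le_of_lt hbΛ) u
      = X δ hδΛ * T.embed Λ g * (X δ hδΛ)⁻¹ := by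
    intro g
    obtain ⟨u, hu⟩ := hbgu g
    refine ⟨T.map (hble g).le u, ?_⟩
    rw [T.map_comp, hu]
  have h1 : δ ≤ gbound b := hgkey b hbΛ δ hδΛ hδlim hvalb
  have h2 : gbound b < δ := hgcl b hbδ
  exact absurd h1 (not_le_of_gt h2)

theorem le_add_one_cases {a b : Ordinal.{u}} (h : a ≤ b + 1) : a ≤ b ∨ a = b + 1 := by
  have h' : a ≤ Order.succ b := by rw [← Ordinal.add_one_eq_succ]; exact h
  rcases Order.le_succ_iff_eq_or_le.mp h' with h'' | h''
  · right; rw [h'', Ordinal.add_one_eq_succ]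
  · left; exact h''

section Uniqueness
variable {G : Type u} [Group G] (T T' : AutTower G)

/-- a coherent family of isomorphisms between the stages of two towers, up to stage `o` -/
def CompatLE (o : Ordinal.{u})
    (Φ : ∀ o' : Ordinal.{u}, o' ≤ o → (↥(T.Stage o') ≃* ↥(T'.Stage o'))) : Prop :=
  (∀ h0 : (0:Ordinal.{u}) ≤ o, ∀ g : G, Φ 0 h0 (T.emb0 g) = T'.emb0 g) ∧
  (∀ o₁ o₂ (h : o₁ ≤ o₂) (h₂ : o₂ ≤ o) (x : ↥(T.Stage o₁)),
    Φ o₂ h₂ (T.map h x) = T'.map h (Φ o₁ (h.trans h₂) x))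

theorem compatLE_mono {o o' : Ordinal.{u}} (hoo : o' ≤ o)
    {Φ : ∀ o'' : Ordinal.{u}, o'' ≤ o → (↥(T.Stage o'') ≃* ↥(T'.Stage o''))}
    (hΦ : CompatLE T T' o Φ) :
    CompatLE T T' o' (fun o'' h => Φ o'' (h.trans hoo)) :=
  ⟨fun h0 g => hΦ.1 _ g, fun o₁ o₂ h h₂ x => hΦ.2 o₁ o₂ h (h₂.trans hoo) x⟩

theorem compatLE_unique (o : Ordinal.{u}) :
    ∀ Φ Ψ, CompatLE T T' o Φ → CompatLE T T' o Ψ →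
      ∀ o' (h : o' ≤ o) (x : ↥(T.Stage o')), Φ o' h x = Ψ o' h x := by
  intro Φ Ψ hΦ hΨ o'
  induction o' using Ordinal.induction with
  | _ o' IH =>
  intro ho' x
  rcases Ordinal.zero_or_succ_or_isSuccLimit o' with h0 | ⟨β, hβ⟩ | hlim
  · subst h0
    have hx : x = T.emb0 (T.emb0.symm x) := (T.emb0.apply_symm_apply x).symm
    rw [hx, hΦ.1 ho' _, hΨ.1 ho' _]
  · rw [← Ordinal.add_one_eq_succ] at hβ
    subst hβ
    have hβlt : β < β + 1 := by rw [Ordinal.add_one_eq_succ]; exact Order.lt_succ β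
    have hβo : β ≤ o := hβlt.le.trans ho'
    -- both Φ (β+1) and Ψ (β+1) intertwine succIso the same way
    have keyΦ : ∀ (Ξ : ∀ o'' : Ordinal.{u}, o'' ≤ o → (↥(T.Stage o'') ≃* ↥(T'.Stage o''))),
        CompatLE T T' o Ξ → ∀ z : ↥(T.Stage β),
        (T'.succIso β) (Ξ (β+1) ho' x) (Ξ β hβo z) = Ξ β hβo (T.succIso β x z) := by
      intro Ξ hΞ z
      apply T'.map_injective ((le_self_add : β ≤ β + 1))
      rw [← T'.conj_map]
      have h1 : T'.map ((le_self_add : β ≤ β + 1)) (Ξ β hβo z)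
          = Ξ (β+1) ho' (T.map ((le_self_add : β ≤ β + 1)) z) := (hΞ.2 β (β+1) _ ho' z).symm
      rw [h1, ← map_mul, ← map_inv, ← map_mul, T.conj_map]
      exact hΞ.2 β (β+1) _ ho' (T.succIso β x z)
    have hIH : ∀ z : ↥(T.Stage β), Φ β hβo z = Ψ β hβo z := fun z => IH β hβlt hβo z
    have hsame : (T'.succIso β) (Φ (β+1) ho' x) = (T'.succIso β) (Ψ (β+1) ho' x) := by
      apply MulEquiv.ext
      intro w
      have hw : w = Φ β hβo ((Φ β hβo).symm w) := ((Φ β hβo).apply_symm_apply w).symm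
      set z := (Φ β hβo).symm w with hz
      rw [hw]
      rw [keyΦ Φ hΦ z, hIH z, hIH ((T.succIso β) x z), ← keyΦ Ψ hΨ z]
    exact (T'.succIso β).injective hsame
  · obtain ⟨γ, hγ, y, hy⟩ := T.limit_covers o' hlim x
    rw [← hy, hΦ.2 γ o' hγ.le ho' y, hΨ.2 γ o' hγ.le ho' y,
      IH γ hγ (hγ.le.trans ho') y]

theorem compatLE_exists : ∀ o : Ordinal.{u}, ∃ Φ, CompatLE T T' o Φ := by
  intro o
  induction o using Ordinal.induction with
  | _ o IH =>
  classical
  choose Fam hFam using IH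
  rcases Ordinal.zero_or_succ_or_isSuccLimit o with h0 | ⟨β, hβ⟩ | hlim
  · subst h0
    refine ⟨fun o' h => (nonpos_iff_eq_zero.mp h).symm ▸ (T.emb0.symm.trans T'.emb0), ?_, ?_⟩
    · intro h0 g
      simp
    · intro o₁ o₂ h h₂ x
      have e1 : o₁ = 0 := nonpos_iff_eq_zero.mp (h.trans h₂)
      have e2 : o₂ = 0 := nonpos_iff_eq_zero.mp h₂
      subst e1; subst e2
      rw [T.map_id, T'.map_id]
  · rw [← Ordinal.add_one_eq_succ] at hβ
    subst hβ
    have hβlt : β < β + 1 := by rw [Ordinal.add_one_eq_succ]; exact Order.lt_succ β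
    set F := Fam β hβlt with hF
    have hFcompat : CompatLE T T' β F := hFam β hβlt
    set τ : ↥(T.Stage (β+1)) ≃* ↥(T'.Stage (β+1)) :=
      ((T.succIso β).trans (MulAut.congr (F β le_rfl))).trans (T'.succIso β).symm with hτ
    have hsq : ∀ z : ↥(T.Stage β),
        τ (T.map ((le_self_add : β ≤ β + 1)) z)
          = T'.map ((le_self_add : β ≤ β + 1)) (F β le_rfl z) := by
      intro z
      apply (T'.succIso β).injective
      rw [T'.succIso_map]
      show (T'.succIso β) ((T'.succIso β).symm
        (MulAut.congr (F β le_rfl) ((T.succIso β) (T.map _ z)))) = _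
      rw [(T'.succIso β).apply_symm_apply, T.succIso_map]
      apply MulEquiv.ext
      intro w
      simp [MulAut.congr, MulAut.conj]
    refine ⟨fun o' h => if h' : o' ≤ β then F o' h' else
      (by
        have : o' = β + 1 := by
          rcases le_add_one_cases h with h'' | h''
          · exact absurd h'' h'
          · exact h''
        exact this.symm ▸ τ), ?_, ?_⟩
    · intro h0 g
      have hz : (0:Ordinal.{u}) ≤ β := zero_le
      simp only [dif_pos hz]
      exact hFcompat.1 hz g
    · intro o₁ o₂ h h₂ x
      by_cases h2β : o₂ ≤ β
      · have h1β : o₁ ≤ β := h.trans h2β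
        simp only [dif_pos h2β, dif_pos h1β]
        exact hFcompat.2 o₁ o₂ h h2β x
      · have ho2 : o₂ = β + 1 := by
          rcases le_add_one_cases h₂ with h'' | h''
          · exact absurd h'' h2β
          · exact h''
        subst ho2
        by_cases h1β : o₁ ≤ β
        · have hfac : T.map h x = T.map ((le_self_add : β ≤ β + 1)) (T.map h1β x) :=
            (T.map_comp _ _ _).symm
          have hfac' : ∀ w : ↥(T'.Stage o₁), T'.map h w
              = T'.map ((le_self_add : β ≤ β + 1)) (T'.map h1β w) :=
            fun w => (T'.map_comp _ _ _).symm
          simp only [dif_neg h2β, dif_pos h1β]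
          rw [hfac, hsq (T.map h1β x), hfac' _]
          congr 1
          exact hFcompat.2 o₁ β h1β le_rfl x
        · have ho1 : o₁ = β + 1 := by
            rcases le_add_one_cases h with h'' | h''
            · exact absurd h'' h1β
            · exact h''
          subst ho1
          simp only [dif_neg h1β]
          rw [T.map_id, T'.map_id]
  · -- limit case
    have hpos : (0:Ordinal.{u}) < o := hlim.pos
    set Fun : ∀ o' : Ordinal.{u}, o' < o → (↥(T.Stage o') ≃* ↥(T'.Stage o')) :=
      fun o' h => Fam o' h o' le_rfl with hFun
    have hsquare : ∀ o₁ o₂ (h12 : o₁ ≤ o₂) (h2 : o₂ < o) (x : ↥(T.Stage o₁)),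
        Fun o₂ h2 (T.map h12 x) = T'.map h12 (Fun o₁ (lt_of_le_of_lt h12 h2) x) := by
      intro o₁ o₂ h12 h2 x
      have hcomp := (hFam o₂ h2).2 o₁ o₂ h12 le_rfl x
      rw [hFun]
      rw [hcomp]
      congr 1
      exact compatLE_unique T T' o₁
        (fun o'' hh => Fam o₂ h2 o'' (hh.trans h12))
        (Fam o₁ (lt_of_le_of_lt h12 h2))
        (compatLE_mono T T' h12 (hFam o₂ h2))
        (hFam o₁ (lt_of_le_of_lt h12 h2)) o₁ le_rfl x
    have hzero : ∀ (h : (0:Ordinal.{u}) < o) (g : G), Fun 0 h (T.emb0 g) = T'.emb0 g :=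
      fun h g => (hFam 0 h).1 le_rfl g
    -- well-definedness of the glued map
    have wd : ∀ β₁ β₂ (h₁ : β₁ < o) (h₂ : β₂ < o) (y₁ : ↥(T.Stage β₁)) (y₂ : ↥(T.Stage β₂)),
        T.map h₁.le y₁ = T.map h₂.le y₂ →
        T'.map h₁.le (Fun β₁ h₁ y₁) = T'.map h₂.le (Fun β₂ h₂ y₂) := by
      intro β₁ β₂ h₁ h₂ y₁ y₂ heq
      set γ := max β₁ β₂ with hγ
      have hγo : γ < o := max_lt h₁ h₂
      have hb1 : β₁ ≤ γ := le_max_left _ _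
      have hb2 : β₂ ≤ γ := le_max_right _ _
      have heq' : T.map hb1 y₁ = T.map hb2 y₂ := by
        apply T.map_injective hγo.le
        rw [T.map_comp, T.map_comp]
        exact heq
      have := congrArg (Fun γ hγo) heq'
      rw [hsquare β₁ γ hb1 hγo y₁, hsquare β₂ γ hb2 hγo y₂] at this
      have h2' := congrArg (T'.map hγo.le) this
      rw [T'.map_comp, T'.map_comp] at h2'
      convert h2' using 2
    have hexy : ∀ x : ↥(T.Stage o), ∃ β, ∃ h : β < o, ∃ y : ↥(T.Stage β),
        T.map h.le y = x := by
      intro x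
      obtain ⟨β, hβ, y, hy⟩ := T.limit_covers o hlim x
      exact ⟨β, hβ, y, hy⟩
    choose cβ chlt cy chy using hexy
    set Fw : ↥(T.Stage o) → ↥(T'.Stage o) :=
      fun x => T'.map (chlt x).le (Fun (cβ x) (chlt x) (cy x)) with hFw
    have hFeval : ∀ β (h : β < o) (y : ↥(T.Stage β)),
        Fw (T.map h.le y) = T'.map h.le (Fun β h y) := by
      intro β h y
      rw [hFw]
      exact wd _ _ _ _ _ _ (chy (T.map h.le y))
    have hFmul : ∀ x₁ x₂, Fw (x₁ * x₂) = Fw x₁ * Fw x₂ := by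
      intro x₁ x₂
      set γ := max (cβ x₁) (cβ x₂) with hγ
      have hγo : γ < o := max_lt (chlt x₁) (chlt x₂)
      have hb1 : cβ x₁ ≤ γ := le_max_left _ _
      have hb2 : cβ x₂ ≤ γ := le_max_right _ _
      have hx1 : x₁ = T.map hγo.le (T.map hb1 (cy x₁)) := by
        rw [T.map_comp]; exact (chy x₁).symm
      have hx2 : x₂ = T.map hγo.le (T.map hb2 (cy x₂)) := by
        rw [T.map_comp]; exact (chy x₂).symm
      have hx12 : x₁ * x₂ = T.map hγo.le (T.map hb1 (cy x₁) * T.map hb2 (cy x₂)) := by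
        rw [map_mul, ← hx1, ← hx2]
      have e1 : Fw x₁ = T'.map hγo.le (Fun γ hγo (T.map hb1 (cy x₁))) := by
        conv_lhs => rw [hx1]
        exact hFeval γ hγo _
      have e2 : Fw x₂ = T'.map hγo.le (Fun γ hγo (T.map hb2 (cy x₂))) := by
        conv_lhs => rw [hx2]
        exact hFeval γ hγo _
      have e12 : Fw (x₁ * x₂)
          = T'.map hγo.le (Fun γ hγo (T.map hb1 (cy x₁) * T.map hb2 (cy x₂))) := by
        conv_lhs => rw [hx12]
        exact hFeval γ hγo _
      rw [e12, e1, e2, map_mul (Fun γ hγo), map_mul (T'.map hγo.le)]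
    have hFinj : Function.Injective Fw := by
      intro x₁ x₂ heq
      set γ := max (cβ x₁) (cβ x₂) with hγ
      have hγo : γ < o := max_lt (chlt x₁) (chlt x₂)
      have hb1 : cβ x₁ ≤ γ := le_max_left _ _
      have hb2 : cβ x₂ ≤ γ := le_max_right _ _
      have hx1 : x₁ = T.map hγo.le (T.map hb1 (cy x₁)) := by
        rw [T.map_comp]; exact (chy x₁).symm
      have hx2 : x₂ = T.map hγo.le (T.map hb2 (cy x₂)) := by
        rw [T.map_comp]; exact (chy x₂).symm
      rw [hx1, hx2, hFeval γ hγo _, hFeval γ hγo _] at heq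
      have h1 := T'.map_injective hγo.le heq
      have h2 := (Fun γ hγo).injective h1
      rw [hx1, hx2, h2]
    have hFsurj : Function.Surjective Fw := by
      intro x'
      obtain ⟨β, hβ, y', hy'⟩ := T'.limit_covers o hlim x'
      refine ⟨T.map hβ.le ((Fun β hβ).symm y'), ?_⟩
      rw [hFeval β hβ _, (Fun β hβ).apply_symm_apply, hy']
    set φδ : ↥(T.Stage o) ≃* ↥(T'.Stage o) :=
      MulEquiv.ofBijective (MonoidHom.mk' Fw hFmul) ⟨hFinj, hFsurj⟩ with hφδ
    have hφδeval : ∀ β (h : β < o) (y : ↥(T.Stage β)),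
        φδ (T.map h.le y) = T'.map h.le (Fun β h y) := hFeval
    refine ⟨fun o' h => if h' : o' < o then Fun o' h' else
      (by
        have : o' = o := le_antisymm h (not_lt.mp h')
        exact this.symm ▸ φδ), ?_, ?_⟩
    · intro h0 g
      simp only [dif_pos hpos]
      exact hzero hpos g
    · intro o₁ o₂ h h₂ x
      by_cases h2o : o₂ < o
      · have h1o : o₁ < o := lt_of_le_of_lt h h2o
        simp only [dif_pos h2o, dif_pos h1o]
        exact hsquare o₁ o₂ h h2o x
      · have ho2 : o₂ = o := le_antisymm h₂ (not_lt.mp h2o)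
        subst ho2
        by_cases h1o : o₁ < o₂
        · simp only [dif_neg h2o, dif_pos h1o]
          exact hφδeval o₁ h1o x
        · have ho1 : o₁ = o₂ := le_antisymm h (not_lt.mp h1o)
          subst ho1
          simp only [dif_neg h2o]
          rw [T.map_id, T'.map_id]

theorem stab_transfer {α : Ordinal.{u}} (h : T.StabilizesAt α) : T'.StabilizesAt α := by
  obtain ⟨Φ, hΦ⟩ := compatLE_exists T T' (α + 1)
  intro y'
  have hαle : α ≤ α + 1 := (le_self_add : α ≤ α + 1)
  obtain ⟨x, hx⟩ := h ((Φ (α+1) le_rfl).symm y')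
  refine ⟨Φ α hαle x, ?_⟩
  have := hΦ.2 α (α+1) hαle le_rfl x
  rw [← this, hx, (Φ (α+1) le_rfl).apply_symm_apply]

end Uniqueness

/-- transporting a tower along an isomorphism of the base group -/
def transport {G H : Type u} [Group G] [Group H] (e : H ≃* G) (T : AutTower G) :
    AutTower H where
  Stage := T.Stage
  map := T.map
  map_id := T.map_id
  map_comp := T.map_comp
  map_injective := T.map_injective
  emb0 := e.trans T.emb0
  succIso := T.succIso
  succIso_map := T.succIso_map
  limit_covers := T.limit_covers

end AutTower

theorem center_transfer {H G : Type u} [Group H] [Group G] (μ : H ≃* G)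
    (h : Subgroup.center G = ⊥) : Subgroup.center H = ⊥ := by
  rw [Subgroup.eq_bot_iff_forall]
  intro x hx
  have hμx : μ x ∈ Subgroup.center G := by
    rw [Subgroup.mem_center_iff]
    intro g
    have hg : g = μ (μ.symm g) := (μ.apply_symm_apply g).symm
    rw [hg, ← map_mul, ← map_mul]
    congr 1
    exact (Subgroup.mem_center_iff.mp hx (μ.symm g))
  rw [h, Subgroup.mem_bot] at hμx
  have : x = μ.symm (μ x) := (μ.symm_apply_apply x).symm
  rw [this, hμx, map_one]

theorem group_struct_card {X : Type u} (κ : Cardinal.{u}) (hκ : Cardinal.aleph0 ≤ κ)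
    (hX : Cardinal.mk X ≤ κ) : Cardinal.mk (Group X) ≤ 2 ^ κ := by
  have h2 : (2:Cardinal.{u}) ^ κ ≠ 0 := Cardinal.power_ne_zero κ two_ne_zero
  have hXκ : Cardinal.mk X ≤ 2 ^ κ := hX.trans (Cardinal.cantor κ).le
  have hmul : Function.Injective (fun inst : Group X => inst.mul) := by
    intro g₁ g₂ h
    exact Group.ext h
  calc Cardinal.mk (Group X) ≤ Cardinal.mk (X → X → X) := Cardinal.mk_le_of_injective hmul
    _ = Cardinal.mk (X → X) ^ Cardinal.mk X := (Cardinal.power_def _ _).symm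
    _ ≤ (2 ^ κ) ^ Cardinal.mk X := by
        apply Cardinal.power_le_power_right
        calc Cardinal.mk (X → X) = Cardinal.mk X ^ Cardinal.mk X := (Cardinal.power_def _ _).symm
          _ ≤ (2 ^ κ) ^ Cardinal.mk X := Cardinal.power_le_power_right hXκ
          _ ≤ (2 ^ κ) ^ κ := Cardinal.power_le_power_left h2 hX
          _ = 2 ^ (κ * κ) := (Cardinal.power_mul).symm
          _ = 2 ^ κ := by rw [Cardinal.mul_eq_self hκ]
    _ ≤ (2 ^ κ) ^ κ := Cardinal.power_le_power_left h2 hX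
    _ = 2 ^ (κ * κ) := (Cardinal.power_mul).symm
    _ = 2 ^ κ := by rw [Cardinal.mul_eq_self hκ]

/-- For every infinite cardinal `κ`, the ordinal
`τ_κ = sup {τ_G + 1 : G centerless of cardinality ≤ κ}` satisfies `τ_κ < (2^κ)⁺`:
there is an ordinal `β` below `(2^κ)⁺` strictly bounding the stabilization ordinals
of the automorphism towers of all centerless groups of cardinality at most `κ`. -/
theorem tau_kappa_lt_succ_two_pow (κ : Cardinal.{u}) (hκ : Cardinal.aleph0 ≤ κ) :
    ∃ β : Ordinal.{u}, β < (Order.succ ((2 : Cardinal.{u}) ^ κ)).ord ∧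
      ∀ (G : Type u) [Group G], Subgroup.center G = ⊥ → Cardinal.mk G ≤ κ →
        ∀ T : AutTower G, ∃ α : Ordinal.{u}, α < β ∧ T.StabilizesAt α := by
  classical
  set Λ : Ordinal.{u} := (Order.succ ((2:Cardinal.{u})^κ)).ord with hΛ
  have h2κ : Cardinal.aleph0 ≤ (2:Cardinal.{u})^κ := hκ.trans (Cardinal.cantor κ).le
  have hΛlim : Order.IsSuccLimit Λ := Cardinal.isSuccLimit_ord (h2κ.trans (Order.le_succ _))
  have hΛcof : Λ.cof = Order.succ ((2:Cardinal.{u})^κ) := (Cardinal.isRegular_succ h2κ).cof_eq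
  set K : Type u := κ.out with hK
  have hKκ : Cardinal.mk K = κ := Cardinal.mk_out κ
  set vS : (Σ s : Set K, Group (Subtype s)) → Ordinal.{u} → Prop := fun i α =>
    α < Λ ∧ ∃ T : @AutTower (Subtype i.1) i.2, @AutTower.StabilizesAt _ i.2 T α with hvS
  set v : (Σ s : Set K, Group (Subtype s)) → Ordinal.{u} :=
    fun i => if h : ∃ α, vS i α then h.choose else 0 with hv
  have hvlt : ∀ i, v i < Λ := by
    intro i
    simp only [hv]
    split
    · next h => exact h.choose_spec.1
    · exact hΛlim.pos
  have hcardι : Cardinal.mk (Σ s : Set K, Group (Subtype s)) ≤ 2 ^ κ := by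
    calc Cardinal.mk (Σ s : Set K, Group (Subtype s))
        = Cardinal.sum (fun s : Set K => Cardinal.mk (Group (Subtype s))) := Cardinal.mk_sigma _
      _ ≤ Cardinal.sum (fun _ : Set K => (2:Cardinal.{u}) ^ κ) := by
          apply Cardinal.sum_le_sum
          intro s
          exact group_struct_card κ hκ ((Cardinal.mk_subtype_le _).trans (le_of_eq hKκ))
      _ = Cardinal.mk (Set K) * 2 ^ κ := Cardinal.sum_const' _ _
      _ = 2 ^ κ * 2 ^ κ := by rw [Cardinal.mk_set, hKκ]
      _ = 2 ^ κ := Cardinal.mul_eq_self h2κ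
  refine ⟨Ordinal.lsub v, ?_, ?_⟩
  · apply Ordinal.lsub_lt_ord _ hvlt
    rw [hΛcof]
    exact lt_of_le_of_lt hcardι (Order.lt_succ _)
  · intro G instG hZ hcard T
    obtain ⟨f⟩ := (Cardinal.le_def G K).mp (by rw [hKκ]; exact hcard)
    set s : Set K := Set.range f with hs
    set e : Subtype s ≃ G := (Equiv.ofInjective f f.injective).symm with he
    letI instS : Group (Subtype s) := e.group
    set μ : Subtype s ≃* G := e.mulEquiv with hμ
    set i : (Σ s : Set K, Group (Subtype s)) := ⟨s, instS⟩ with hi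
    set T₀ : AutTower (Subtype s) := AutTower.transport μ T with hT₀
    have hZ₀ : Subgroup.center (Subtype s) = ⊥ := center_transfer μ hZ
    have hcard₀ : Cardinal.mk (Subtype s) ≤ κ := (Cardinal.mk_subtype_le _).trans (le_of_eq hKκ)
    obtain ⟨α₁, hα₁Λ, hstab₁⟩ := T₀.exists_stab κ hκ hZ₀ hcard₀
    have hex : ∃ α, vS i α := ⟨α₁, hα₁Λ, T₀, hstab₁⟩
    have hspec : vS i (v i) := by
      simp only [hv]
      rw [dif_pos hex]
      exact hex.choose_spec
    obtain ⟨hvΛ, T', hT'⟩ := hspec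
    have hstabT₀ : T₀.StabilizesAt (v i) := AutTower.stab_transfer T' T₀ hT'
    exact ⟨v i, Ordinal.lt_lsub v i, hstabT₀⟩
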